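/- arXiv:2509.00832 — 8 statements merged into one kernel-verified Lean document; each statement's English description precedes it below -/
import Mathlib

section
/- Let N ≥ 1 and let x, y : Fin N → EuclideanSpace ℝ (Fin 3) be two point clouds. Then PM²(x,y) ≤ 2 · RMSD²(x,y), i.e. (1/N²)·Σ_{i,j} (‖x i − x j‖ − ‖y i − y j‖)² ≤ (2/N)·Σ_i ‖x i − y i‖². -/
/-- For point clouds `x, y : Fin N → EuclideanSpace ℝ (Fin 3)` with `N ≥ 1`,
the squared Packing Matching score is bounded by twice the squared RMSD:
`PM²(x,y) ≤ 2 · RMSD²(x,y)`. -/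
theorem pm_sq_le_two_rmsd_sq (N : ℕ) (hN : 1 ≤ N)
    (x y : Fin N → EuclideanSpace ℝ (Fin 3)) :
    (1 / (N : ℝ) ^ 2) * ∑ i, ∑ j, (‖x i - x j‖ - ‖y i - y j‖) ^ 2 ≤
      (2 / (N : ℝ)) * ∑ i, ‖x i - y i‖ ^ 2 := by
  set u : Fin N → EuclideanSpace ℝ (Fin 3) := fun i => x i - y i with hu
  have hNpos : (0 : ℝ) < N := by exact_mod_cast hN
  -- step 1: termwise bound
  have h1 : ∀ i j, (‖x i - x j‖ - ‖y i - y j‖) ^ 2 ≤ ‖u i - u j‖ ^ 2 := by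
    intro i j
    have habs : |‖x i - x j‖ - ‖y i - y j‖| ≤ ‖(x i - x j) - (y i - y j)‖ :=
      abs_norm_sub_norm_le _ _
    have heq : (x i - x j) - (y i - y j) = u i - u j := by
      simp [hu]; abel
    calc (‖x i - x j‖ - ‖y i - y j‖) ^ 2 = |‖x i - x j‖ - ‖y i - y j‖| ^ 2 := by
          rw [sq_abs]
      _ ≤ ‖u i - u j‖ ^ 2 := by
          apply pow_le_pow_left₀ (abs_nonneg _)
          rw [← heq]; exact habs
  have h2 : ∑ i, ∑ j, (‖x i - x j‖ - ‖y i - y j‖) ^ 2 ≤ ∑ i, ∑ j, ‖u i - u j‖ ^ 2 := by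
    apply Finset.sum_le_sum; intro i _
    apply Finset.sum_le_sum; intro j _
    exact h1 i j
  -- step 2: expansion
  have h3 : ∑ i : Fin N, ∑ j : Fin N, ‖u i - u j‖ ^ 2 ≤ 2 * N * ∑ i, ‖u i‖ ^ 2 := by
    have hexp : ∀ i j : Fin N, ‖u i - u j‖ ^ 2 =
        ‖u i‖ ^ 2 - 2 * inner ℝ (u i) (u j) + ‖u j‖ ^ 2 := fun i j =>
      @norm_sub_sq_real (EuclideanSpace ℝ (Fin 3)) _ _ (u i) (u j)
    have e1 : ∑ i : Fin N, ∑ j : Fin N, (inner ℝ (u i) (u j) : ℝ) = ‖∑ i, u i‖ ^ 2 := by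
      rw [← real_inner_self_eq_norm_sq]
      simp only [sum_inner, inner_sum]
      exact Finset.sum_comm
    have hsum : ∑ i : Fin N, ∑ j : Fin N, ‖u i - u j‖ ^ 2 =
        2 * N * ∑ i, ‖u i‖ ^ 2 - 2 * ‖∑ i, u i‖ ^ 2 := by
      simp only [hexp]
      rw [← e1]
      have inner_step : ∀ i : Fin N,
          ∑ j, (‖u i‖ ^ 2 - 2 * (inner ℝ (u i) (u j) : ℝ) + ‖u j‖ ^ 2) =
            (N : ℝ) * ‖u i‖ ^ 2 - 2 * (∑ j, (inner ℝ (u i) (u j) : ℝ)) + ∑ j, ‖u j‖ ^ 2 := by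
        intro i
        rw [Finset.sum_add_distrib, Finset.sum_sub_distrib, Finset.sum_const,
          ← Finset.mul_sum]
        simp [Finset.card_univ, nsmul_eq_mul]
      simp only [inner_step]
      rw [Finset.sum_add_distrib, Finset.sum_sub_distrib, ← Finset.mul_sum,
        ← Finset.mul_sum, Finset.sum_const, Finset.card_univ, Fintype.card_fin,
        nsmul_eq_mul]
      ring
    rw [hsum]
    have : (0:ℝ) ≤ 2 * ‖∑ i, u i‖ ^ 2 := by positivity
    linarith
  have h4 : ∑ i, ∑ j, (‖x i - x j‖ - ‖y i - y j‖) ^ 2 ≤ 2 * N * ∑ i, ‖u i‖ ^ 2 :=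
    le_trans h2 h3
  have key : (1 / (N : ℝ) ^ 2) * (2 * N * ∑ i, ‖u i‖ ^ 2) = (2 / N) * ∑ i, ‖u i‖ ^ 2 := by
    field_simp
  calc (1 / (N : ℝ) ^ 2) * ∑ i, ∑ j, (‖x i - x j‖ - ‖y i - y j‖) ^ 2
      ≤ (1 / (N : ℝ) ^ 2) * (2 * N * ∑ i, ‖u i‖ ^ 2) := by
        apply mul_le_mul_of_nonneg_left h4; positivity
    _ = (2 / N) * ∑ i, ‖u i‖ ^ 2 := key
    _ = (2 / N) * ∑ i, ‖x i - y i‖ ^ 2 := rfl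
end

section
/- Let N ≥ 1 and let x, y : Fin N → EuclideanSpace ℝ (Fin 3) be two point clouds, with centroids x̄ = (1/N)·Σ_i x i and ȳ = (1/N)·Σ_i y i. Then PM²(x,y) − 2 · RMSD²(x,y) ≤ −2 · ‖x̄ − ȳ‖². -/
/-- For point clouds `x, y : Fin N → EuclideanSpace ℝ (Fin 3)` with `N ≥ 1`,
with centroids `x̄ = (1/N)·Σ_i x i` and `ȳ = (1/N)·Σ_i y i`, we have
`PM²(x,y) − 2·RMSD²(x,y) ≤ −2·‖x̄ − ȳ‖²`. -/
theorem pm_sq_sub_two_rmsd_sq_le (N : ℕ) (hN : 1 ≤ N)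
    (x y : Fin N → EuclideanSpace ℝ (Fin 3)) :
    (1 / (N : ℝ) ^ 2) * ∑ i, ∑ j, (‖x i - x j‖ - ‖y i - y j‖) ^ 2 -
        2 * ((1 / (N : ℝ)) * ∑ i, ‖x i - y i‖ ^ 2) ≤
      -2 * ‖(1 / (N : ℝ)) • ∑ i, x i - (1 / (N : ℝ)) • ∑ i, y i‖ ^ 2 := by
  have hN0 : (N : ℝ) ≠ 0 := by positivity
  set d : Fin N → EuclideanSpace ℝ (Fin 3) := fun i => x i - y i with hd
  have key : ∀ i j, (‖x i - x j‖ - ‖y i - y j‖) ^ 2 ≤ ‖d i - d j‖ ^ 2 := by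
    intro i j
    have h1 : |‖x i - x j‖ - ‖y i - y j‖| ≤ ‖(x i - x j) - (y i - y j)‖ :=
      abs_norm_sub_norm_le _ _
    have h2 : (x i - x j) - (y i - y j) = d i - d j := by simp [hd]; abel
    calc (‖x i - x j‖ - ‖y i - y j‖) ^ 2 = |‖x i - x j‖ - ‖y i - y j‖| ^ 2 := (sq_abs _).symm
      _ ≤ ‖(x i - x j) - (y i - y j)‖ ^ 2 := by
          exact pow_le_pow_left₀ (abs_nonneg _) h1 2
      _ = ‖d i - d j‖ ^ 2 := by rw [h2]
  have hsum : ∑ i, ∑ j, ‖d i - d j‖ ^ 2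
      = 2 * N * ∑ i, ‖d i‖ ^ 2 - 2 * ‖∑ i, d i‖ ^ 2 := by
    have hT : ‖∑ i, d i‖ ^ 2 = ∑ i, ∑ j, (inner ℝ (d i) (d j) : ℝ) := by
      rw [← real_inner_self_eq_norm_sq, sum_inner]
      exact Finset.sum_congr rfl fun i _ => inner_sum _ _ _
    have a1 : ∑ _i : Fin N, ∑ i : Fin N, ‖d i‖ ^ 2 = (N : ℝ) * ∑ i, ‖d i‖ ^ 2 := by
      simp [Finset.sum_const, Finset.card_univ]
    have a2 : ∑ i : Fin N, ∑ _j : Fin N, ‖d i‖ ^ 2 = (N : ℝ) * ∑ i, ‖d i‖ ^ 2 := by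
      rw [Finset.sum_comm]; exact a1
    simp_rw [norm_sub_sq_real, Finset.sum_add_distrib, Finset.sum_sub_distrib,
      ← Finset.mul_sum]
    rw [a1, a2, ← hT]
    ring
  have hmain : ∑ i, ∑ j, (‖x i - x j‖ - ‖y i - y j‖) ^ 2
      ≤ 2 * N * ∑ i, ‖d i‖ ^ 2 - 2 * ‖∑ i, d i‖ ^ 2 := by
    rw [← hsum]
    exact Finset.sum_le_sum fun i _ => Finset.sum_le_sum fun j _ => key i j
  have hcent : (1 / (N : ℝ)) • ∑ i, x i - (1 / (N : ℝ)) • ∑ i, y i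
      = (1 / (N : ℝ)) • ∑ i, d i := by
    rw [← smul_sub, ← Finset.sum_sub_distrib]
  rw [hcent]
  have hnorm : ‖(1 / (N : ℝ)) • ∑ i, d i‖ ^ 2 = (1 / (N : ℝ)) ^ 2 * ‖∑ i, d i‖ ^ 2 := by
    rw [norm_smul]
    simp [mul_pow, abs_of_nonneg (by positivity : (0:ℝ) ≤ 1 / (N:ℝ))]
  rw [hnorm]
  have hdi : ∀ i, ‖x i - y i‖ ^ 2 = ‖d i‖ ^ 2 := fun i => rfl
  simp_rw [hdi]
  have h3 : (1 / (N : ℝ) ^ 2) * ∑ i, ∑ j, (‖x i - x j‖ - ‖y i - y j‖) ^ 2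
      ≤ (1 / (N : ℝ) ^ 2) * (2 * N * ∑ i, ‖d i‖ ^ 2 - 2 * ‖∑ i, d i‖ ^ 2) :=
    mul_le_mul_of_nonneg_left hmain (by positivity)
  have h4 : (1 / (N : ℝ) ^ 2) * (2 * N * ∑ i, ‖d i‖ ^ 2 - 2 * ‖∑ i, d i‖ ^ 2)
      = 2 * ((1 / (N : ℝ)) * ∑ i, ‖d i‖ ^ 2) + (-2 * ((1 / (N : ℝ)) ^ 2 * ‖∑ i, d i‖ ^ 2)) := by
    field_simp; ring
  linarith [h3, h4.symm ▸ h3]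
end

section
/- Let N ≥ 1 and let x, y : Fin N → EuclideanSpace ℝ (Fin 3) be two point clouds. Then PM(x,y) ≤ √2 · RMSD(x,y), where PM(x,y) and RMSD(x,y) denote the (nonnegative) square roots of the squared Packing Matching score and squared RMSD respectively. -/
/-- For point clouds `x, y : Fin N → EuclideanSpace ℝ (Fin 3)` with `N ≥ 1`,
the Packing Matching score is at most `√2` times the RMSD:
`PM(x,y) ≤ √2 · RMSD(x,y)`. -/
theorem pm_le_sqrt_two_mul_rmsd (N : ℕ) (hN : 1 ≤ N)
    (x y : Fin N → EuclideanSpace ℝ (Fin 3)) :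
    Real.sqrt ((1 / (N : ℝ) ^ 2) * ∑ i, ∑ j, (‖x i - x j‖ - ‖y i - y j‖) ^ 2) ≤
      Real.sqrt 2 * Real.sqrt ((1 / (N : ℝ)) * ∑ i, ‖x i - y i‖ ^ 2) := by
  have hNpos : (0 : ℝ) < N := by exact_mod_cast hN
  set d : Fin N → EuclideanSpace ℝ (Fin 3) := fun i => x i - y i with hd
  -- termwise bound
  have hterm : ∀ i j : Fin N,
      (‖x i - x j‖ - ‖y i - y j‖) ^ 2 ≤ ‖d i - d j‖ ^ 2 := by
    intro i j
    have h1 : |‖x i - x j‖ - ‖y i - y j‖| ≤ ‖(x i - x j) - (y i - y j)‖ :=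
      abs_norm_sub_norm_le _ _
    have h2 : (x i - x j) - (y i - y j) = d i - d j := by
      simp [hd]; abel
    rw [h2] at h1
    calc (‖x i - x j‖ - ‖y i - y j‖) ^ 2
        = |‖x i - x j‖ - ‖y i - y j‖| ^ 2 := (sq_abs _).symm
      _ ≤ ‖d i - d j‖ ^ 2 := by
          exact pow_le_pow_left₀ (abs_nonneg _) h1 2
  -- expand double sum of ‖d i - d j‖²
  have hexpand : ∑ i, ∑ j, ‖d i - d j‖ ^ 2
      = 2 * N * (∑ i, ‖d i‖ ^ 2) - 2 * ‖∑ i, d i‖ ^ 2 := by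
    have h : ∀ i j : Fin N, ‖d i - d j‖ ^ 2
        = ‖d i‖ ^ 2 + ‖d j‖ ^ 2 - 2 * inner ℝ (d i) (d j) := by
      intro i j
      rw [norm_sub_sq_real]; ring
    have hin : ∑ i, ∑ j, (inner ℝ (d i) (d j) : ℝ) = ‖∑ i, d i‖ ^ 2 := by
      rw [← real_inner_self_eq_norm_sq, sum_inner]
      exact Finset.sum_congr rfl fun i _ => (inner_sum _ _ _).symm
    simp only [h, Finset.sum_sub_distrib, Finset.sum_add_distrib,
      Finset.sum_const, Finset.card_fin, nsmul_eq_mul, ← Finset.mul_sum, hin]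
    ring
  have hsum : ∑ i, ∑ j, (‖x i - x j‖ - ‖y i - y j‖) ^ 2
      ≤ 2 * N * (∑ i, ‖d i‖ ^ 2) := by
    calc ∑ i, ∑ j, (‖x i - x j‖ - ‖y i - y j‖) ^ 2
        ≤ ∑ i, ∑ j, ‖d i - d j‖ ^ 2 := by
          apply Finset.sum_le_sum; intro i _
          exact Finset.sum_le_sum fun j _ => hterm i j
      _ = 2 * N * (∑ i, ‖d i‖ ^ 2) - 2 * ‖∑ i, d i‖ ^ 2 := hexpand
      _ ≤ 2 * N * (∑ i, ‖d i‖ ^ 2) := by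
          have : (0:ℝ) ≤ 2 * ‖∑ i, d i‖ ^ 2 := by positivity
          linarith
  rw [← Real.sqrt_mul (by norm_num)]
  apply Real.sqrt_le_sqrt
  have key : (1 / (N : ℝ) ^ 2) * (2 * N * (∑ i, ‖d i‖ ^ 2))
      = 2 * ((1 / (N : ℝ)) * ∑ i, ‖d i‖ ^ 2) := by
    field_simp
  calc (1 / (N : ℝ) ^ 2) * ∑ i, ∑ j, (‖x i - x j‖ - ‖y i - y j‖) ^ 2
      ≤ (1 / (N : ℝ) ^ 2) * (2 * N * (∑ i, ‖d i‖ ^ 2)) := by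
        apply mul_le_mul_of_nonneg_left hsum (by positivity)
    _ = 2 * ((1 / (N : ℝ)) * ∑ i, ‖d i‖ ^ 2) := key
end

section
/- Let N ≥ 1 and let x, y : Fin N → EuclideanSpace ℝ (Fin 3) be two point clouds. If PM(x,y) > 2·√2 then RMSD(x,y) > 2. -/
/-- For point clouds `x, y : Fin N → EuclideanSpace ℝ (Fin 3)` with `N ≥ 1`,
if `PM(x,y) > 2·√2` then `RMSD(x,y) > 2`. -/
theorem rmsd_gt_two_of_pm_gt (N : ℕ) (hN : 1 ≤ N)
    (x y : Fin N → EuclideanSpace ℝ (Fin 3))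
    (h : Real.sqrt ((1 / (N : ℝ) ^ 2) *
        ∑ i, ∑ j, (‖x i - x j‖ - ‖y i - y j‖) ^ 2) > 2 * Real.sqrt 2) :
    Real.sqrt ((1 / (N : ℝ)) * ∑ i, ‖x i - y i‖ ^ 2) > 2 := by
  set v : Fin N → EuclideanSpace ℝ (Fin 3) := fun i => x i - y i with hv
  have hNpos : (0 : ℝ) < N := by exact_mod_cast hN
  -- pointwise bound
  have h1 : ∀ i j, (‖x i - x j‖ - ‖y i - y j‖) ^ 2 ≤ ‖v i - v j‖ ^ 2 := by
    intro i j
    have habs := abs_norm_sub_norm_le (x i - x j) (y i - y j)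
    have heq : (x i - x j) - (y i - y j) = v i - v j := by
      simp only [hv]; abel
    calc (‖x i - x j‖ - ‖y i - y j‖) ^ 2
        = |‖x i - x j‖ - ‖y i - y j‖| ^ 2 := (sq_abs _).symm
      _ ≤ ‖(x i - x j) - (y i - y j)‖ ^ 2 := by
          exact pow_le_pow_left₀ (abs_nonneg _) habs 2
      _ = ‖v i - v j‖ ^ 2 := by rw [heq]
  -- sum expansion
  have hexp : ∑ i, ∑ j, ‖v i - v j‖ ^ 2
      = 2 * N * ∑ i, ‖v i‖ ^ 2 - 2 * ‖∑ i, v i‖ ^ 2 := by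
    have : ∀ i j : Fin N, ‖v i - v j‖ ^ 2
        = ‖v i‖ ^ 2 - 2 * inner ℝ (v i) (v j) + ‖v j‖ ^ 2 := fun i j =>
      norm_sub_sq_real (v i) (v j)
    simp only [this, Finset.sum_add_distrib, Finset.sum_sub_distrib,
      Finset.sum_const, Finset.card_univ, Fintype.card_fin, nsmul_eq_mul,
      ← Finset.mul_sum, ← Finset.sum_mul]
    have hinner : ∑ i, ∑ j, (inner ℝ (v i) (v j) : ℝ) = ‖∑ i, v i‖ ^ 2 := by
      rw [← real_inner_self_eq_norm_sq, sum_inner]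
      exact Finset.sum_congr rfl fun i _ => (inner_sum _ _ _).symm
    rw [hinner]
    ring
  have hkey : ∑ i, ∑ j, (‖x i - x j‖ - ‖y i - y j‖) ^ 2 ≤ 2 * N * ∑ i, ‖v i‖ ^ 2 := by
    calc ∑ i, ∑ j, (‖x i - x j‖ - ‖y i - y j‖) ^ 2
        ≤ ∑ i, ∑ j, ‖v i - v j‖ ^ 2 :=
          Finset.sum_le_sum fun i _ => Finset.sum_le_sum fun j _ => h1 i j
      _ = 2 * N * ∑ i, ‖v i‖ ^ 2 - 2 * ‖∑ i, v i‖ ^ 2 := hexp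
      _ ≤ 2 * N * ∑ i, ‖v i‖ ^ 2 := by nlinarith [sq_nonneg ‖∑ i, v i‖]
  -- relate the averaged quantities
  have hle : (1 / (N : ℝ) ^ 2) * ∑ i, ∑ j, (‖x i - x j‖ - ‖y i - y j‖) ^ 2
      ≤ 2 * ((1 / (N : ℝ)) * ∑ i, ‖v i‖ ^ 2) := by
    rw [one_div, one_div, inv_mul_eq_div, inv_mul_eq_div, ← mul_div_assoc,
      div_le_div_iff₀ (by positivity) hNpos]
    nlinarith [mul_le_mul_of_nonneg_right hkey hNpos.le]
  have hsqrt : Real.sqrt ((1 / (N : ℝ) ^ 2) * ∑ i, ∑ j, (‖x i - x j‖ - ‖y i - y j‖) ^ 2)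
      ≤ Real.sqrt 2 * Real.sqrt ((1 / (N : ℝ)) * ∑ i, ‖v i‖ ^ 2) := by
    rw [← Real.sqrt_mul (by norm_num)]
    exact Real.sqrt_le_sqrt hle
  have h2 : 2 * Real.sqrt 2 < Real.sqrt 2 * Real.sqrt ((1 / (N : ℝ)) * ∑ i, ‖v i‖ ^ 2) :=
    lt_of_lt_of_le h hsqrt
  have hs2 : (0 : ℝ) < Real.sqrt 2 := Real.sqrt_pos.mpr (by norm_num)
  have : Real.sqrt 2 * 2 < Real.sqrt 2 * Real.sqrt ((1 / (N : ℝ)) * ∑ i, ‖v i‖ ^ 2) := by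
    linarith [h2]
  have := lt_of_mul_lt_mul_left this (le_of_lt hs2)
  simpa [hv] using this
end

section
/- Pointwise displacement identity for a rigid motion encoded by a unit quaternion: let Q = (s, q⃗) be a unit quaternion with rotation matrix R(Q), and let a⃗, t⃗ ∈ ℝ³. Then ‖a⃗ − R(Q)·a⃗ − t⃗‖² = (q⃗ · t⃗)² + ‖−s·t⃗ + (2a⃗ − t⃗) × q⃗‖². -/
open Matrix

/-- The Euclidean squared norm of a vector in `ℝ³`. -/
noncomputable def sqnorm (u : Fin 3 → ℝ) : ℝ :=
  ‖(EuclideanSpace.equiv (Fin 3) ℝ).symm u‖ ^ 2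

/-- The rotation matrix associated with the unit quaternion `(s, q⃗)`. -/
def rotMat (s : ℝ) (q : Fin 3 → ℝ) : Matrix (Fin 3) (Fin 3) ℝ :=
  !![s ^ 2 + q 0 ^ 2 - q 1 ^ 2 - q 2 ^ 2, 2 * q 0 * q 1 - 2 * s * q 2,
      2 * q 0 * q 2 + 2 * s * q 1;
    2 * q 0 * q 1 + 2 * s * q 2, s ^ 2 - q 0 ^ 2 + q 1 ^ 2 - q 2 ^ 2,
      2 * q 1 * q 2 - 2 * s * q 0;
    2 * q 0 * q 2 - 2 * s * q 1, 2 * q 1 * q 2 + 2 * s * q 0,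
      s ^ 2 - q 0 ^ 2 - q 1 ^ 2 + q 2 ^ 2]

lemma sqnorm_eq (u : Fin 3 → ℝ) : sqnorm u = u 0 ^ 2 + u 1 ^ 2 + u 2 ^ 2 := by
  simp [sqnorm, EuclideanSpace.norm_eq, Real.sq_sqrt (by positivity :
    (0:ℝ) ≤ u 0 ^ 2 + u 1 ^ 2 + u 2 ^ 2), Fin.sum_univ_three, sq_abs]

/-- Pointwise displacement identity for a rigid motion encoded by a unit
quaternion `Q = (s, q⃗)` with rotation matrix `R(Q)`:
`‖a⃗ − R(Q)·a⃗ − t⃗‖² = (q⃗ · t⃗)² + ‖−s·t⃗ + (2a⃗ − t⃗) × q⃗‖²`. -/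
theorem displacement_sq_eq (s : ℝ) (q : Fin 3 → ℝ)
    (hQ : s ^ 2 + sqnorm q = 1) (a t : Fin 3 → ℝ) :
    sqnorm (a - rotMat s q *ᵥ a - t) =
      (q ⬝ᵥ t) ^ 2 + sqnorm ((-s) • t + ((2 : ℝ) • a - t) ⨯₃ q) := by
  rw [sqnorm_eq] at hQ
  simp only [sqnorm_eq, rotMat, cross_apply, dotProduct, Fin.sum_univ_three,
    Pi.sub_apply, Pi.add_apply, Pi.smul_apply, smul_eq_mul, mulVec,
    LinearMap.coe_mk, AddHom.coe_mk, cons_val_zero, cons_val_one, head_cons,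
    cons_val_two, tail_cons, cons_dotProduct, vecHead, vecTail,
    dotProduct_of_isEmpty, Function.comp_apply, Fin.succ_zero_eq_one,
    Fin.succ_one_eq_two, empty_mulVec, Matrix.cons_mulVec]
  ring_nf
  linear_combination ((s^2 + q 0^2 + q 1^2 + q 2^2) * (a 0^2 + a 1^2 + a 2^2) - (a 0^2 + a 1^2 + a 2^2) + 2*(a 0*t 0 + a 1*t 1 + a 2*t 2) - (t 0^2 + t 1^2 + t 2^2)) * hQ
end

section
/- Pure-rotation displacement identity: let Q = (s, q⃗) be a unit quaternion with rotation matrix R(Q), and let a⃗ ∈ ℝ³. Then ‖a⃗ − R(Q)·a⃗‖² = 4·‖q⃗ × a⃗‖², equivalently ‖a⃗ − R(Q)·a⃗‖² = 4·(q⃗ᵀ · I(a⃗) · q⃗) where I(a⃗) = ‖a⃗‖²·E₃ − a⃗·a⃗ᵀ is the inertia tensor of the single point a⃗ (E₃ the 3×3 identity matrix). -/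
open Matrix

/-- The inertia tensor of a single point `a⃗ ∈ ℝ³`:
`I(a⃗) = ‖a⃗‖²·E₃ − a⃗·a⃗ᵀ`. -/
noncomputable def inertiaPoint (a : Fin 3 → ℝ) : Matrix (Fin 3) (Fin 3) ℝ :=
  sqnorm a • (1 : Matrix (Fin 3) (Fin 3) ℝ) - vecMulVec a a

/-- Pure-rotation displacement identity: for a unit quaternion `Q = (s, q⃗)`
with rotation matrix `R(Q)` and any `a⃗ ∈ ℝ³`,
`‖a⃗ − R(Q)·a⃗‖² = 4·‖q⃗ × a⃗‖²`, equivalently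
`‖a⃗ − R(Q)·a⃗‖² = 4·(q⃗ᵀ · I(a⃗) · q⃗)`. -/
theorem pure_rotation_displacement_sq (s : ℝ) (q : Fin 3 → ℝ)
    (hQ : s ^ 2 + sqnorm q = 1) (a : Fin 3 → ℝ) :
    sqnorm (a - rotMat s q *ᵥ a) = 4 * sqnorm (q ⨯₃ a) ∧
    sqnorm (a - rotMat s q *ᵥ a) = 4 * (q ⬝ᵥ (inertiaPoint a *ᵥ q)) := by
  rw [sqnorm_eq] at hQ
  simp only [sqnorm_eq, rotMat, inertiaPoint, crossProduct, mulVec, dotProduct,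
    Fin.sum_univ_three, Pi.sub_apply, mulVec, Matrix.sub_apply, Matrix.smul_apply, one_apply,
    vecMulVec_apply, smul_eq_mul]
  norm_num [Matrix.cons_val_zero, Matrix.cons_val_one, Matrix.cons_val_two, Fin.ext_iff]
  constructor <;>
    linear_combination (a 0 ^ 2 + a 1 ^ 2 + a 2 ^ 2) *
      (s ^ 2 + q 0 ^ 2 + q 1 ^ 2 + q 2 ^ 2 - 1) * hQ
end

section
/- Rigid-body RMSD formula in an arbitrary frame: let N ≥ 1, let a : Fin N → ℝ³ be points with weights w : Fin N → ℝ satisfying w i ≥ 0 and W := Σ_i w i > 0, let Q = (s, q⃗) be a unit quaternion with rotation matrix R := R(Q), and let t⃗ ∈ ℝ³. Then (1/W)·Σ_i w i · ‖a i − R·(a i) − t⃗‖² = ‖t⃗‖² + (4/W)·(q⃗ᵀ · I · q⃗) + 2·t⃗ᵀ·(R − E₃)·c⃗, where I is the weighted inertia tensor of the points a, c⃗ = (1/W)·Σ_i w i · a i is the weighted centroid, and E₃ is the 3×3 identity matrix. -/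
open Matrix

/-- The weighted inertia tensor of points `a i = (x i, y i, z i) ∈ ℝ³`
with weights `w i`. -/
def inertia (N : ℕ) (w : Fin N → ℝ) (a : Fin N → Fin 3 → ℝ) :
    Matrix (Fin 3) (Fin 3) ℝ :=
  !![∑ i, w i * ((a i 1) ^ 2 + (a i 2) ^ 2), -∑ i, w i * (a i 0 * a i 1),
      -∑ i, w i * (a i 0 * a i 2);
    -∑ i, w i * (a i 0 * a i 1), ∑ i, w i * ((a i 0) ^ 2 + (a i 2) ^ 2),
      -∑ i, w i * (a i 1 * a i 2);
    -∑ i, w i * (a i 0 * a i 2), -∑ i, w i * (a i 1 * a i 2),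
      ∑ i, w i * ((a i 0) ^ 2 + (a i 1) ^ 2)]

set_option maxHeartbeats 1000000 in
/-- Rigid-body RMSD formula in an arbitrary frame: for weighted points `a`
with weights `w ≥ 0`, total weight `W > 0`, a unit quaternion `(s, q⃗)` with
rotation matrix `R` and a translation `t⃗`,
`(1/W)·Σ_i w i·‖a i − R·a i − t⃗‖² = ‖t⃗‖² + (4/W)·q⃗ᵀ·I·q⃗ + 2·t⃗ᵀ·(R − E₃)·c⃗`,
where `I` is the weighted inertia tensor and `c⃗` the weighted centroid. -/
theorem rigid_rmsd_formula (N : ℕ) (hN : 1 ≤ N)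
    (a : Fin N → Fin 3 → ℝ) (w : Fin N → ℝ)
    (hw : ∀ i, 0 ≤ w i) (hW : 0 < ∑ i, w i)
    (s : ℝ) (q : Fin 3 → ℝ) (hQ : s ^ 2 + sqnorm q = 1) (t : Fin 3 → ℝ) :
    (1 / ∑ i, w i) * ∑ i, w i * sqnorm (a i - rotMat s q *ᵥ a i - t) =
      sqnorm t + (4 / ∑ i, w i) * (q ⬝ᵥ (inertia N w a *ᵥ q)) +
        2 * (t ⬝ᵥ ((rotMat s q - 1) *ᵥ ((1 / ∑ i, w i) • ∑ i, w i • a i))) := by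
  have hW0 : (∑ i, w i) ≠ 0 := ne_of_gt hW
  have hQ' : s ^ 2 + (q 0 ^ 2 + q 1 ^ 2 + q 2 ^ 2) = 1 := by rw [← sqnorm_eq]; exact hQ
  have hL : ∑ i, w i * sqnorm (a i - rotMat s q *ᵥ a i - t) =
      ∑ i, (w i * (t 0 ^ 2 + t 1 ^ 2 + t 2 ^ 2)
        + (w i * ((a i 1) ^ 2 + (a i 2) ^ 2)) * (4 * q 0 ^ 2)
        + (w i * ((a i 0) ^ 2 + (a i 2) ^ 2)) * (4 * q 1 ^ 2)
        + (w i * ((a i 0) ^ 2 + (a i 1) ^ 2)) * (4 * q 2 ^ 2)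
        + (w i * (a i 0 * a i 1)) * (-(8 * (q 0 * q 1)))
        + (w i * (a i 0 * a i 2)) * (-(8 * (q 0 * q 2)))
        + (w i * (a i 1 * a i 2)) * (-(8 * (q 1 * q 2)))
        + (w i * a i 0) * (2 * (t 0 * ((s ^ 2 + q 0 ^ 2 - q 1 ^ 2 - q 2 ^ 2) - 1)
            + t 1 * (2 * q 0 * q 1 + 2 * s * q 2) + t 2 * (2 * q 0 * q 2 - 2 * s * q 1)))
        + (w i * a i 1) * (2 * (t 0 * (2 * q 0 * q 1 - 2 * s * q 2)
            + t 1 * ((s ^ 2 - q 0 ^ 2 + q 1 ^ 2 - q 2 ^ 2) - 1) + t 2 * (2 * q 1 * q 2 + 2 * s * q 0)))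
        + (w i * a i 2) * (2 * (t 0 * (2 * q 0 * q 2 + 2 * s * q 1)
            + t 1 * (2 * q 1 * q 2 - 2 * s * q 0) + t 2 * ((s ^ 2 - q 0 ^ 2 - q 1 ^ 2 + q 2 ^ 2) - 1)))) := by
    refine Finset.sum_congr rfl fun i _ => ?_
    rw [sqnorm_eq]
    simp [rotMat, mulVec, dotProduct, Fin.sum_univ_three, Matrix.vecHead, Matrix.vecTail]
    linear_combination (w i * (a i 0 ^ 2 + a i 1 ^ 2 + a i 2 ^ 2) *
      (s ^ 2 + q 0 ^ 2 + q 1 ^ 2 + q 2 ^ 2 - 1)) * hQ'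
  rw [hL, sqnorm_eq t]
  simp only [Finset.sum_add_distrib, ← Finset.sum_mul]
  simp [inertia, rotMat, mulVec, dotProduct, Fin.sum_univ_three, Matrix.vecHead, Matrix.vecTail,
    Matrix.sub_apply, Matrix.one_apply, Pi.smul_apply, Finset.sum_apply, smul_eq_mul]
  field_simp
  ring
end

section
/- Rigid-body RMSD formula in the center-of-mass frame: let N ≥ 1, let a : Fin N → ℝ³ be points with weights w : Fin N → ℝ satisfying w i ≥ 0 and W := Σ_i w i > 0, and suppose the weighted centroid vanishes: Σ_i w i · a i = 0. Let Q = (s, q⃗) be a unit quaternion with rotation matrix R := R(Q) and t⃗ ∈ ℝ³. Then (1/W)·Σ_i w i · ‖a i − R·(a i) − t⃗‖² = ‖t⃗‖² + (4/W)·(q⃗ᵀ · I · q⃗), where I is the weighted inertia tensor of the points a. -/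
open Matrix

lemma rmsd_pointwise (s : ℝ) (q : Fin 3 → ℝ)
    (hQ' : s ^ 2 + (q 0 ^ 2 + q 1 ^ 2 + q 2 ^ 2) = 1)
    (wi : ℝ) (x : Fin 3 → ℝ) (t : Fin 3 → ℝ) :
    wi * sqnorm (x - rotMat s q *ᵥ x - t) =
      wi * sqnorm t
      + 4 * (wi * ((x 1 ^ 2 + x 2 ^ 2) * q 0 ^ 2 + (x 0 ^ 2 + x 2 ^ 2) * q 1 ^ 2
          + (x 0 ^ 2 + x 1 ^ 2) * q 2 ^ 2
          - 2 * (x 0 * x 1) * (q 0 * q 1) - 2 * (x 0 * x 2) * (q 0 * q 2)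
          - 2 * (x 1 * x 2) * (q 1 * q 2)))
      + (2 * ((s ^ 2 + q 0 ^ 2 - q 1 ^ 2 - q 2 ^ 2 - 1) * t 0
          + (2 * q 0 * q 1 + 2 * s * q 2) * t 1 + (2 * q 0 * q 2 - 2 * s * q 1) * t 2))
          * (wi * x 0)
      + (2 * ((2 * q 0 * q 1 - 2 * s * q 2) * t 0
          + (s ^ 2 - q 0 ^ 2 + q 1 ^ 2 - q 2 ^ 2 - 1) * t 1
          + (2 * q 1 * q 2 + 2 * s * q 0) * t 2)) * (wi * x 1)
      + (2 * ((2 * q 0 * q 2 + 2 * s * q 1) * t 0 + (2 * q 1 * q 2 - 2 * s * q 0) * t 1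
          + (s ^ 2 - q 0 ^ 2 - q 1 ^ 2 + q 2 ^ 2 - 1) * t 2)) * (wi * x 2) := by
  simp only [sqnorm_eq, rotMat, Matrix.mulVec, dotProduct, Fin.sum_univ_three,
    Pi.sub_apply, Matrix.cons_val', Matrix.cons_val_zero, Matrix.cons_val_one,
    Matrix.head_cons, Matrix.empty_val', Matrix.cons_val_fin_one, Matrix.head_fin_const,
    Matrix.cons_val_two, Matrix.tail_cons, Matrix.of_apply]
  linear_combination (wi * (x 0 ^ 2 + x 1 ^ 2 + x 2 ^ 2)
    * (s ^ 2 + q 0 ^ 2 + q 1 ^ 2 + q 2 ^ 2 - 1)) * hQ'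

lemma inertia_quad (N : ℕ) (w : Fin N → ℝ) (a : Fin N → Fin 3 → ℝ) (q : Fin 3 → ℝ) :
    q ⬝ᵥ (inertia N w a *ᵥ q) =
      ∑ i, w i * ((a i 1 ^ 2 + a i 2 ^ 2) * q 0 ^ 2 + (a i 0 ^ 2 + a i 2 ^ 2) * q 1 ^ 2
        + (a i 0 ^ 2 + a i 1 ^ 2) * q 2 ^ 2
        - 2 * (a i 0 * a i 1) * (q 0 * q 1) - 2 * (a i 0 * a i 2) * (q 0 * q 2)
        - 2 * (a i 1 * a i 2) * (q 1 * q 2)) := by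
  simp only [inertia, Matrix.mulVec, dotProduct, Fin.sum_univ_three,
    Matrix.cons_val', Matrix.cons_val_zero, Matrix.cons_val_one,
    Matrix.head_cons, Matrix.empty_val', Matrix.cons_val_fin_one, Matrix.head_fin_const,
    Matrix.cons_val_two, Matrix.tail_cons, Matrix.of_apply]
  simp only [mul_add, add_mul, mul_neg, neg_mul, Finset.mul_sum, Finset.sum_mul,
    ← Finset.sum_neg_distrib, ← Finset.sum_add_distrib, ← Finset.sum_sub_distrib]
  exact (Finset.sum_congr rfl fun i _ => by ring).symm

/-- Rigid-body RMSD formula in the center-of-mass frame: if the weighted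
centroid of the points vanishes, then for a unit quaternion `(s, q⃗)` with
rotation matrix `R` and a translation `t⃗`,
`(1/W)·Σ_i w i·‖a i − R·a i − t⃗‖² = ‖t⃗‖² + (4/W)·q⃗ᵀ·I·q⃗`. -/
theorem rigid_rmsd_formula_com (N : ℕ) (hN : 1 ≤ N)
    (a : Fin N → Fin 3 → ℝ) (w : Fin N → ℝ)
    (hw : ∀ i, 0 ≤ w i) (hW : 0 < ∑ i, w i)
    (hc : ∑ i, w i • a i = 0)
    (s : ℝ) (q : Fin 3 → ℝ) (hQ : s ^ 2 + sqnorm q = 1) (t : Fin 3 → ℝ) :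
    (1 / ∑ i, w i) * ∑ i, w i * sqnorm (a i - rotMat s q *ᵥ a i - t) =
      sqnorm t + (4 / ∑ i, w i) * (q ⬝ᵥ (inertia N w a *ᵥ q)) := by
  have hQ' : s ^ 2 + (q 0 ^ 2 + q 1 ^ 2 + q 2 ^ 2) = 1 := by
    rw [← sqnorm_eq]; exact hQ
  have hcj : ∀ j : Fin 3, ∑ i, w i * a i j = 0 := by
    intro j
    have := congrFun hc j
    simpa [Finset.sum_apply] using this
  have hsum : ∑ i, w i * sqnorm (a i - rotMat s q *ᵥ a i - t) =
      (∑ i, w i) * sqnorm t + 4 * (q ⬝ᵥ (inertia N w a *ᵥ q)) := by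
    rw [Finset.sum_congr rfl fun i _ => rmsd_pointwise s q hQ' (w i) (a i) t]
    simp only [Finset.sum_add_distrib, ← Finset.sum_mul, ← Finset.mul_sum]
    rw [hcj 0, hcj 1, hcj 2, inertia_quad]
    ring
  rw [hsum]
  field_simp
end
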